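/- arXiv:1510.02394 — 2 statements merged into one kernel-verified Lean document; each statement's English description precedes it below -/
import Mathlib

section
/- Let G be a simple connected graph with at least one edge and let P₁ be the normalized adjacency matrix D^{-1/2} A D^{-1/2} of the subdivision graph s(G) and P₀ that of G. If μ is a nonzero eigenvalue of P₁, then 2μ² − 1 is an eigenvalue of P₀ with the same multiplicity. -/
set_option linter.unusedSectionVars false
set_option maxHeartbeats 1000000


/-- The subdivision graph `s(G)`: one new vertex inserted on each edge of `G`. -/
def subdivision {V : Type} (G : SimpleGraph V) : SimpleGraph (V ⊕ G.edgeSet) where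
  Adj x y :=
    match x, y with
    | Sum.inl v, Sum.inr e => v ∈ (e : Sym2 V)
    | Sum.inr e, Sum.inl v => v ∈ (e : Sym2 V)
    | _, _ => False
  symm := ⟨by rintro (v | e) (w | f) h <;> exact h⟩
  loopless := ⟨by rintro (v | e) h <;> exact h⟩

/-- The iterated subdivision `sⁿ(G)`, as a pair (vertex type, graph). -/
def iterSubdiv {V : Type} (G : SimpleGraph V) : ℕ → (W : Type) × SimpleGraph W
  | 0 => ⟨V, G⟩
  | n + 1 => ⟨_, subdivision (iterSubdiv G n).2⟩

instance iterSubdivFinite {V : Type} [Finite V] (G : SimpleGraph V) :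
    ∀ n, Finite (iterSubdiv G n).1
  | 0 => ‹Finite V›
  | n + 1 => by
    haveI := iterSubdivFinite G n
    exact inferInstanceAs (Finite ((iterSubdiv G n).1 ⊕ (iterSubdiv G n).2.edgeSet))

open Classical in
noncomputable def normAdj {V : Type} (G : SimpleGraph V) : Matrix V V ℝ :=
  Matrix.of fun i j =>
    if G.Adj i j then
      1 / Real.sqrt ((Nat.card (G.neighborSet i) : ℝ) * (Nat.card (G.neighborSet j) : ℝ))
    else 0

open Classical in
noncomputable def normLap {V : Type} (G : SimpleGraph V) : Matrix V V ℝ :=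
  1 - normAdj G

theorem normAdj_isHermitian {V : Type} (G : SimpleGraph V) : (normAdj G).IsHermitian := by
  unfold Matrix.IsHermitian
  ext i j
  simp only [Matrix.conjTranspose_apply, normAdj, Matrix.of_apply, star_trivial]
  rw [G.adj_comm]
  rcases em (G.Adj i j) with h | h <;> simp [h, mul_comm]

open Classical in
theorem normLap_isHermitian {V : Type} (G : SimpleGraph V) : (normLap G).IsHermitian :=
  Matrix.isHermitian_one.sub (normAdj_isHermitian G)

/-- `μ` is an eigenvalue of the matrix `M`. -/
def IsEigenvalueM {V : Type} [Finite V] (M : Matrix V V ℝ) (μ : ℝ) : Prop :=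
  haveI := Fintype.ofFinite V
  haveI := Classical.decEq V
  Module.End.HasEigenvalue (Matrix.toLin' M) μ

/-- The multiplicity of `μ` as an eigenvalue of `M` (dimension of the eigenspace). -/
noncomputable def eigMult {V : Type} [Finite V] (M : Matrix V V ℝ) (μ : ℝ) : ℕ :=
  haveI := Fintype.ofFinite V
  haveI := Classical.decEq V
  Module.finrank ℝ ↥(Module.End.eigenspace (Matrix.toLin' M) μ)

open Classical in
noncomputable def kemeny {V : Type} [Finite V] (G : SimpleGraph V) : ℝ :=
  haveI := Fintype.ofFinite V
  haveI := Classical.decEq V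
  ∑ i : V, (if (normLap_isHermitian G).eigenvalues i = 0 then 0
            else ((normLap_isHermitian G).eigenvalues i)⁻¹)

/-- The multiplicative degree-Kirchhoff index `Kf* = 2|E| · Σ_{k≥2} 1/λ_k`. -/
noncomputable def kirchhoffStar {V : Type} [Finite V] (G : SimpleGraph V) : ℝ :=
  2 * (Nat.card G.edgeSet : ℝ) * kemeny G

/-- The number of spanning trees of `G`. -/
noncomputable def numSpanningTrees {V : Type} (G : SimpleGraph V) : ℕ :=
  Nat.card {H : G.Subgraph // H.IsSpanning ∧ H.coe.IsTree}
section Helpers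
variable {V : Type} [Fintype V] [DecidableEq V] (G : SimpleGraph V) [DecidableRel G.Adj]

@[simp] lemma subdiv_adj_inl_inr (v : V) (e : G.edgeSet) :
    (subdivision G).Adj (Sum.inl v) (Sum.inr e) ↔ v ∈ (e : Sym2 V) := Iff.rfl

@[simp] lemma subdiv_adj_inr_inl (v : V) (e : G.edgeSet) :
    (subdivision G).Adj (Sum.inr e) (Sum.inl v) ↔ v ∈ (e : Sym2 V) := Iff.rfl

@[simp] lemma subdiv_adj_inl_inl (v w : V) :
    ¬ (subdivision G).Adj (Sum.inl v) (Sum.inl w) := fun h => h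

@[simp] lemma subdiv_adj_inr_inr (e f : G.edgeSet) :
    ¬ (subdivision G).Adj (Sum.inr e) (Sum.inr f) := fun h => h

lemma card_sub_inl (v : V) :
    Nat.card ((subdivision G).neighborSet (Sum.inl v)) = G.degree v := by
  have e1 : ((subdivision G).neighborSet (Sum.inl v)) ≃ G.incidenceSet v :=
  { toFun := fun x => match x with
      | ⟨Sum.inr e, h⟩ => ⟨e.1, e.2, h⟩
      | ⟨Sum.inl _, h⟩ => absurd h (by simp)
    invFun := fun e => ⟨Sum.inr ⟨e.1, e.2.1⟩, e.2.2⟩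
    left_inv := by rintro ⟨(w | e), h⟩
                   · exact absurd h (by simp)
                   · rfl
    right_inv := fun e => rfl }
  rw [Nat.card_congr e1, Nat.card_eq_fintype_card, SimpleGraph.card_incidenceSet_eq_degree]

lemma card_sub_inr (e : G.edgeSet) :
    Nat.card ((subdivision G).neighborSet (Sum.inr e)) = 2 := by
  obtain ⟨e, he⟩ := e
  induction e with
  | _ a b =>
    have hab : a ≠ b := ((SimpleGraph.mem_edgeSet G).mp he).ne
    have hset : (subdivision G).neighborSet (Sum.inr ⟨s(a,b), he⟩) =
        ({Sum.inl a, Sum.inl b} : Set (V ⊕ G.edgeSet)) := by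
      ext x
      rcases x with w | f
      · constructor
        · intro h
          simpa using Sym2.mem_iff.mp h
        · intro h
          have : w ∈ (s(a,b) : Sym2 V) := by
            rcases h with h | h <;> simp_all
          exact this
      · simp only [Set.mem_insert_iff, Set.mem_singleton_iff]
        constructor
        · intro h; exact absurd h (by simp)
        · rintro (h|h) <;> exact absurd h (by simp)
    rw [hset, Nat.card_coe_set_eq, Set.ncard_pair (by simpa using hab)]

end Helpers

section Helpers2
variable {V : Type} [Fintype V] [DecidableEq V] (G : SimpleGraph V) [DecidableRel G.Adj]
  [Fintype G.edgeSet]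

lemma deg_pos (hG : G.Connected) (hE : 1 ≤ Nat.card G.edgeSet) (v : V) : 0 < G.degree v := by
  rw [SimpleGraph.degree_pos_iff_exists_adj]
  have hne : Nonempty G.edgeSet := (Nat.card_pos_iff.mp hE).1
  obtain ⟨a, b, hab⟩ : ∃ a b, G.Adj a b := by
    obtain ⟨e, he⟩ := hne.some
    exact @Sym2.ind V (fun e => e ∈ G.edgeSet → ∃ a b, G.Adj a b)
      (fun a b h => ⟨a, b, (SimpleGraph.mem_edgeSet G).mp h⟩) e he
  by_cases hva : v = a
  · exact ⟨b, hva ▸ hab⟩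
  · obtain ⟨p⟩ := hG.preconnected v a
    exact ⟨p.getVert 1, SimpleGraph.Walk.adj_snd (p := p) (SimpleGraph.Walk.not_nil_of_ne hva)⟩

lemma normAdj_sub_inl_inr (v : V) (e : G.edgeSet) :
    normAdj (subdivision G) (Sum.inl v) (Sum.inr e) =
      if v ∈ (e : Sym2 V) then (Real.sqrt (2 * (G.degree v : ℝ)))⁻¹ else 0 := by
  simp only [normAdj, Matrix.of_apply]
  by_cases h : v ∈ (e : Sym2 V)
  · rw [if_pos ((subdiv_adj_inl_inr G v e).mpr h), if_pos h, card_sub_inl, card_sub_inr]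
    push_cast
    rw [mul_comm, one_div]
  · rw [if_neg (fun hc => h ((subdiv_adj_inl_inr G v e).mp hc)), if_neg h]

lemma normAdj_sub_inr_inl (v : V) (e : G.edgeSet) :
    normAdj (subdivision G) (Sum.inr e) (Sum.inl v) =
      if v ∈ (e : Sym2 V) then (Real.sqrt (2 * (G.degree v : ℝ)))⁻¹ else 0 := by
  simp only [normAdj, Matrix.of_apply]
  by_cases h : v ∈ (e : Sym2 V)
  · rw [if_pos ((subdiv_adj_inr_inl G v e).mpr h), if_pos h, card_sub_inl, card_sub_inr]
    push_cast
    rw [one_div]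
  · rw [if_neg (fun hc => h ((subdiv_adj_inr_inl G v e).mp hc)), if_neg h]

lemma normAdj_sub_inl_inl (v w : V) :
    normAdj (subdivision G) (Sum.inl v) (Sum.inl w) = 0 := by
  simp only [normAdj, Matrix.of_apply]
  exact if_neg (subdiv_adj_inl_inl G v w)

lemma normAdj_sub_inr_inr (e f : G.edgeSet) :
    normAdj (subdivision G) (Sum.inr e) (Sum.inr f) = 0 := by
  simp only [normAdj, Matrix.of_apply]
  exact if_neg (subdiv_adj_inr_inr G e f)

lemma M_mulVec_inl (z : V ⊕ G.edgeSet → ℝ) (v : V) :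
    (normAdj (subdivision G)).mulVec z (Sum.inl v) =
      ∑ e : G.edgeSet, (if v ∈ (e : Sym2 V) then
        (Real.sqrt (2 * (G.degree v : ℝ)))⁻¹ * z (Sum.inr e) else 0) := by
  simp only [Matrix.mulVec, dotProduct, Fintype.sum_sum_type,
    normAdj_sub_inl_inl, normAdj_sub_inl_inr, zero_mul, Finset.sum_const_zero, zero_add,
    ite_mul, zero_mul]

lemma M_mulVec_inr (z : V ⊕ G.edgeSet → ℝ) (e : G.edgeSet) :
    (normAdj (subdivision G)).mulVec z (Sum.inr e) =
      ∑ w : V, (if w ∈ (e : Sym2 V) then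
        (Real.sqrt (2 * (G.degree w : ℝ)))⁻¹ * z (Sum.inl w) else 0) := by
  simp only [Matrix.mulVec, dotProduct, Fintype.sum_sum_type,
    normAdj_sub_inr_inr, normAdj_sub_inr_inl, zero_mul, Finset.sum_const_zero, add_zero,
    ite_mul, zero_mul]

lemma normAdj_mulVec (x : V → ℝ) (v : V) :
    (normAdj G).mulVec x v =
      ∑ w : V, (if G.Adj v w then
        (Real.sqrt ((G.degree v : ℝ) * (G.degree w : ℝ)))⁻¹ * x w else 0) := by
  simp only [Matrix.mulVec, dotProduct, normAdj, Matrix.of_apply, ite_mul, zero_mul]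
  refine Finset.sum_congr rfl fun w _ => ?_
  by_cases h : G.Adj v w
  · rw [if_pos h, if_pos h]
    have h1 : Nat.card (G.neighborSet v) = G.degree v := by
      rw [Nat.card_eq_fintype_card]; exact G.card_neighborSet_eq_degree v
    have h2 : Nat.card (G.neighborSet w) = G.degree w := by
      rw [Nat.card_eq_fintype_card]; exact G.card_neighborSet_eq_degree w
    rw [h1, h2, one_div]
  · rw [if_neg h, if_neg h]

lemma count_diag (v : V) (r : ℝ) :
    ∑ e : G.edgeSet, (if v ∈ (e : Sym2 V) then r else 0) = (G.degree v : ℝ) * r := by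
  have e2 : {e : G.edgeSet // v ∈ (e : Sym2 V)} ≃ G.incidenceSet v :=
    ⟨fun x => ⟨x.1.1, x.1.2, x.2⟩, fun e => ⟨⟨e.1, e.2.1⟩, e.2.2⟩, fun _ => rfl, fun _ => rfl⟩
  have hc : (Finset.univ.filter fun e : G.edgeSet => v ∈ (e : Sym2 V)).card = G.degree v := by
    rw [← Fintype.card_subtype, ← Nat.card_eq_fintype_card, Nat.card_congr e2,
      Nat.card_eq_fintype_card, SimpleGraph.card_incidenceSet_eq_degree]
  calc ∑ e : G.edgeSet, (if v ∈ (e : Sym2 V) then r else 0)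
      = ∑ e : G.edgeSet, (if v ∈ (e : Sym2 V) then (1:ℝ) else 0) * r := by
        simp [ite_mul]
    _ = (G.degree v : ℝ) * r := by rw [← Finset.sum_mul, Finset.sum_boole, hc]

lemma count_off (v w : V) (hvw : v ≠ w) (r : ℝ) :
    ∑ e : G.edgeSet, (if v ∈ (e : Sym2 V) ∧ w ∈ (e : Sym2 V) then r else 0)
      = if G.Adj v w then r else 0 := by
  simp only [Sym2.mem_and_mem_iff hvw]
  rw [← Finset.sum_subtype G.edgeFinset (fun x => SimpleGraph.mem_edgeFinset)
      (fun e => if e = s(v,w) then r else 0),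
    Finset.sum_ite_eq' G.edgeFinset s(v,w) (fun _ => r)]
  simp [SimpleGraph.mem_edgeFinset]

end Helpers2

section Key
variable {V : Type} [Fintype V] [DecidableEq V] (G : SimpleGraph V) [DecidableRel G.Adj]
  [Fintype G.edgeSet]

lemma sqrt_two_mul_self (t : ℝ) (ht : 0 ≤ t) :
    (Real.sqrt (2 * t))⁻¹ * (Real.sqrt (2 * t))⁻¹ = (2 * t)⁻¹ := by
  rw [← mul_inv, Real.mul_self_sqrt (by positivity)]

lemma sqrt_two_mul_mul (s t : ℝ) (hs : 0 ≤ s) (ht : 0 ≤ t) :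
    (Real.sqrt (2 * s))⁻¹ * (Real.sqrt (2 * t))⁻¹ = (Real.sqrt (s * t))⁻¹ / 2 := by
  rw [← mul_inv, ← Real.sqrt_mul (by positivity),
    show 2 * s * (2 * t) = 2 ^ 2 * (s * t) by ring,
    Real.sqrt_mul (by positivity), Real.sqrt_sq (by norm_num)]
  rw [mul_inv, div_eq_mul_inv, mul_comm]

lemma key_sum (hd : ∀ u : V, 0 < G.degree u) (x : V → ℝ) (v : V) :
    ∑ e : G.edgeSet, (if v ∈ (e : Sym2 V) then
        (Real.sqrt (2 * (G.degree v : ℝ)))⁻¹ *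
          (∑ w : V, if w ∈ (e : Sym2 V) then (Real.sqrt (2 * (G.degree w : ℝ)))⁻¹ * x w else 0)
      else 0)
    = (x v + (normAdj G).mulVec x v) / 2 := by
  set a : V → ℝ := fun u => (Real.sqrt (2 * (G.degree u : ℝ)))⁻¹ with ha
  have step1 : ∀ e : G.edgeSet,
      (if v ∈ (e : Sym2 V) then a v * (∑ w : V, if w ∈ (e : Sym2 V) then a w * x w else 0) else 0)
      = ∑ w : V, (if v ∈ (e : Sym2 V) ∧ w ∈ (e : Sym2 V) then a v * (a w * x w) else 0) := by
    intro e
    by_cases h : v ∈ (e : Sym2 V)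
    · rw [if_pos h, Finset.mul_sum]
      exact Finset.sum_congr rfl fun w _ => by by_cases hw : w ∈ (e : Sym2 V) <;> simp [h, hw]
    · rw [if_neg h]
      symm
      refine Finset.sum_eq_zero fun w _ => if_neg (fun hc => h hc.1)
  rw [Finset.sum_congr rfl fun e _ => step1 e, Finset.sum_comm]
  have step3 : ∀ w : V,
      (∑ e : G.edgeSet, if v ∈ (e : Sym2 V) ∧ w ∈ (e : Sym2 V) then a v * (a w * x w) else 0)
      = (if w = v then (G.degree v : ℝ) * (a v * (a v * x v)) else 0)
        + (if G.Adj v w then a v * (a w * x w) else 0) := by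
    intro w
    by_cases hw : w = v
    · subst hw
      rw [if_pos rfl, if_neg (G.irrefl), add_zero]
      simp only [and_self]
      exact count_diag G w _
    · rw [if_neg hw, zero_add]
      exact count_off G v w (fun h => hw h.symm) _
  rw [Finset.sum_congr rfl fun w _ => step3 w, Finset.sum_add_distrib,
    Finset.sum_ite_eq' Finset.univ v (fun _ => (G.degree v : ℝ) * (a v * (a v * x v))),
    if_pos (Finset.mem_univ v)]
  have hd' : (0:ℝ) < (G.degree v : ℝ) := by exact_mod_cast hd v
  have diag : (G.degree v : ℝ) * (a v * (a v * x v)) = x v / 2 := by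
    rw [ha, ← mul_assoc (Real.sqrt _)⁻¹, sqrt_two_mul_self _ hd'.le]
    field_simp
  have offd : (∑ w : V, if G.Adj v w then a v * (a w * x w) else 0)
      = (normAdj G).mulVec x v / 2 := by
    rw [normAdj_mulVec, Finset.sum_div]
    refine Finset.sum_congr rfl fun w _ => ?_
    by_cases h : G.Adj v w
    · rw [if_pos h, if_pos h, ha]
      have hw' : (0:ℝ) < (G.degree w : ℝ) := by exact_mod_cast hd w
      rw [← mul_assoc, sqrt_two_mul_mul _ _ hd'.le hw'.le]
      ring
    · rw [if_neg h, if_neg h, zero_div]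
  rw [diag, offd]
  ring

end Key

section Eig
variable {V : Type} [Fintype V] [DecidableEq V] (G : SimpleGraph V) [DecidableRel G.Adj]
  [Fintype G.edgeSet]

lemma recover (μ : ℝ) (z : V ⊕ G.edgeSet → ℝ)
    (hz : (normAdj (subdivision G)).mulVec z = μ • z) (e : G.edgeSet) :
    (∑ w : V, if w ∈ (e : Sym2 V) then
        (Real.sqrt (2 * (G.degree w : ℝ)))⁻¹ * z (Sum.inl w) else 0) = μ * z (Sum.inr e) := by
  have := congrFun hz (Sum.inr e)
  rw [M_mulVec_inr] at this
  simpa using this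

lemma forward (hd : ∀ u : V, 0 < G.degree u) (μ : ℝ) (z : V ⊕ G.edgeSet → ℝ)
    (hz : (normAdj (subdivision G)).mulVec z = μ • z) :
    (normAdj G).mulVec (fun w => z (Sum.inl w)) = (2 * μ ^ 2 - 1) • (fun w => z (Sum.inl w)) := by
  funext v
  have hi : (∑ e : G.edgeSet, if v ∈ (e : Sym2 V) then
      (Real.sqrt (2 * (G.degree v : ℝ)))⁻¹ * z (Sum.inr e) else 0) = μ * z (Sum.inl v) := by
    have := congrFun hz (Sum.inl v)
    rw [M_mulVec_inl] at this
    simpa using this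
  have hkey := key_sum G hd (fun w => z (Sum.inl w)) v
  simp only [recover G μ z hz] at hkey
  have pull : ∀ e : G.edgeSet,
      (if v ∈ (e : Sym2 V) then
        (Real.sqrt (2 * (G.degree v : ℝ)))⁻¹ * (μ * z (Sum.inr e)) else 0)
      = μ * (if v ∈ (e : Sym2 V) then
        (Real.sqrt (2 * (G.degree v : ℝ)))⁻¹ * z (Sum.inr e) else 0) := by
    intro e; split <;> ring
  rw [Finset.sum_congr rfl fun e _ => pull e, ← Finset.mul_sum, hi] at hkey
  have : ((2 * μ ^ 2 - 1) • fun w => z (Sum.inl w)) v = (2 * μ ^ 2 - 1) * z (Sum.inl v) := rfl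
  rw [this]
  linear_combination -2 * hkey

lemma backward (hd : ∀ u : V, 0 < G.degree u) (μ : ℝ) (hμ : μ ≠ 0) (x : V → ℝ)
    (hx : (normAdj G).mulVec x = (2 * μ ^ 2 - 1) • x) :
    (normAdj (subdivision G)).mulVec
      (Sum.elim x (fun e : G.edgeSet => μ⁻¹ * ∑ w : V, if w ∈ (e : Sym2 V) then
        (Real.sqrt (2 * (G.degree w : ℝ)))⁻¹ * x w else 0))
    = μ • (Sum.elim x (fun e : G.edgeSet => μ⁻¹ * ∑ w : V, if w ∈ (e : Sym2 V) then
        (Real.sqrt (2 * (G.degree w : ℝ)))⁻¹ * x w else 0)) := by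
  set z := Sum.elim x (fun e : G.edgeSet => μ⁻¹ * ∑ w : V, if w ∈ (e : Sym2 V) then
        (Real.sqrt (2 * (G.degree w : ℝ)))⁻¹ * x w else 0) with hzdef
  funext y
  rcases y with v | e
  · rw [M_mulVec_inl]
    have pull : ∀ e : G.edgeSet,
        (if v ∈ (e : Sym2 V) then
          (Real.sqrt (2 * (G.degree v : ℝ)))⁻¹ * z (Sum.inr e) else 0)
        = μ⁻¹ * (if v ∈ (e : Sym2 V) then
          (Real.sqrt (2 * (G.degree v : ℝ)))⁻¹ *
            (∑ w : V, if w ∈ (e : Sym2 V) then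
              (Real.sqrt (2 * (G.degree w : ℝ)))⁻¹ * x w else 0) else 0) := by
      intro e
      show (if v ∈ (e : Sym2 V) then _ * (μ⁻¹ * _) else 0) = _
      split <;> ring
    rw [Finset.sum_congr rfl fun e _ => pull e, ← Finset.mul_sum, key_sum G hd x v]
    have hxv := congrFun hx v
    have : ((2 * μ ^ 2 - 1) • x) v = (2 * μ ^ 2 - 1) * x v := rfl
    rw [this] at hxv
    rw [hxv]
    show _ = μ * x v
    field_simp
    ring
  · rw [M_mulVec_inr]
    have : ∀ w : V, z (Sum.inl w) = x w := fun w => rfl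
    simp only [this]
    show _ = μ * (μ⁻¹ * _)
    rw [← mul_assoc, mul_inv_cancel₀ hμ, one_mul]

end Eig


lemma isEigenvalueM_iff {W : Type} [Fintype W] [DecidableEq W] (M : Matrix W W ℝ) (μ : ℝ) :
    IsEigenvalueM M μ ↔ ∃ x : W → ℝ, x ≠ 0 ∧ M.mulVec x = μ • x := by
  unfold IsEigenvalueM
  rw [Subsingleton.elim (Fintype.ofFinite W) ‹Fintype W›,
    Subsingleton.elim (Classical.decEq W) ‹DecidableEq W›]
  rw [Module.End.hasEigenvalue_iff, Submodule.ne_bot_iff]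
  constructor
  · rintro ⟨x, hx, hx0⟩
    exact ⟨x, hx0, by simpa [Matrix.toLin'_apply] using Module.End.mem_eigenspace_iff.mp hx⟩
  · rintro ⟨x, hx0, hx⟩
    exact ⟨x, Module.End.mem_eigenspace_iff.mpr (by simpa [Matrix.toLin'_apply] using hx), hx0⟩

lemma eigMult_eq {W : Type} [Fintype W] [DecidableEq W] (M : Matrix W W ℝ) (μ : ℝ) :
    eigMult M μ = Module.finrank ℝ ↥(Module.End.eigenspace (Matrix.toLin' M) μ) := by
  unfold eigMult
  rw [Subsingleton.elim (Fintype.ofFinite W) ‹Fintype W›,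
    Subsingleton.elim (Classical.decEq W) ‹DecidableEq W›]


/-- nonzero eigenvalue `μ` of `P₁ = P(s(G))` gives eigenvalue `2μ²−1`
of `P₀ = P(G)` with the same multiplicity. -/
theorem subdivision_eigenvalue_down {V : Type} [Finite V] (G : SimpleGraph V)
    (hG : G.Connected) (hE : 1 ≤ Nat.card G.edgeSet) (μ : ℝ) (hμ : μ ≠ 0)
    (h : IsEigenvalueM (normAdj (subdivision G)) μ) :
    IsEigenvalueM (normAdj G) (2 * μ ^ 2 - 1) ∧
      eigMult (normAdj G) (2 * μ ^ 2 - 1) = eigMult (normAdj (subdivision G)) μ := by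
  haveI : Fintype V := Fintype.ofFinite V
  haveI : DecidableEq V := Classical.decEq V
  haveI : DecidableRel G.Adj := Classical.decRel _
  haveI : Fintype G.edgeSet := Fintype.ofFinite _
  haveI : DecidableEq (V ⊕ G.edgeSet) := Classical.decEq _
  have hd : ∀ u : V, 0 < G.degree u := deg_pos G hG hE
  have memE1 : ∀ z : V ⊕ G.edgeSet → ℝ,
      z ∈ Module.End.eigenspace (Matrix.toLin' (normAdj (subdivision G))) μ ↔
        (normAdj (subdivision G)).mulVec z = μ • z := fun z => by
    rw [Module.End.mem_eigenspace_iff, Matrix.toLin'_apply]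
  have memE0 : ∀ x : V → ℝ,
      x ∈ Module.End.eigenspace (Matrix.toLin' (normAdj G)) (2 * μ ^ 2 - 1) ↔
        (normAdj G).mulVec x = (2 * μ ^ 2 - 1) • x := fun x => by
    rw [Module.End.mem_eigenspace_iff, Matrix.toLin'_apply]
  obtain ⟨z, hz0, hz⟩ := (isEigenvalueM_iff _ μ).mp h
  constructor
  · refine (isEigenvalueM_iff _ _).mpr ⟨fun w => z (Sum.inl w), ?_, forward G hd μ z hz⟩
    intro hx0
    apply hz0
    funext y
    rcases y with v | e
    · exact congrFun hx0 v
    · have hr := recover G μ z hz e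
      have : ∀ w : V, z (Sum.inl w) = 0 := fun w => congrFun hx0 w
      simp only [this, mul_zero, ite_self, Finset.sum_const_zero] at hr
      have := hr.symm
      rcases mul_eq_zero.mp this with h' | h'
      · exact absurd h' hμ
      · exact h'
  · rw [eigMult_eq, eigMult_eq]
    refine (LinearEquiv.finrank_eq ?_).symm
    refine
      { toFun := fun zz => ⟨fun w => zz.1 (Sum.inl w),
          (memE0 _).mpr (forward G hd μ zz.1 ((memE1 _).mp zz.2))⟩
        map_add' := fun y z => rfl
        map_smul' := fun c z => rfl
        invFun := fun x => ⟨Sum.elim x.1 (fun e : G.edgeSet => μ⁻¹ *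
            ∑ w : V, if w ∈ (e : Sym2 V) then
              (Real.sqrt (2 * (G.degree w : ℝ)))⁻¹ * x.1 w else 0),
          (memE1 _).mpr (backward G hd μ hμ x.1 ((memE0 _).mp x.2))⟩
        left_inv := ?_
        right_inv := ?_ }
    · rintro ⟨zz, hzz⟩
      apply Subtype.ext
      funext y
      rcases y with v | e
      · rfl
      · show μ⁻¹ * _ = zz (Sum.inr e)
        rw [recover G μ zz ((memE1 _).mp hzz) e, ← mul_assoc, inv_mul_cancel₀ hμ, one_mul]
    · rintro ⟨x, hx⟩
      apply Subtype.ext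
      funext v
      rfl
end

section
/- Let G be a simple connected graph with N₀ vertices, E₀ edges, and circuit rank r = E₀ − N₀ + 1. For n ≥ 2, the multiplicity of the eigenvalue 1 of the normalized Laplacian Lₙ of sⁿ(G) equals r + 1, independent of n. -/
section AuxDev

open Sum Classical Module LinearMap Matrix

variable {U : Type}

/-! ### Basic facts about `subdivision` -/

lemma subdivision_adj {G : SimpleGraph U} {v : U} {e : G.edgeSet} :
    (subdivision G).Adj (Sum.inl v) (Sum.inr e) ↔ v ∈ (e : Sym2 U) := Iff.rfl

lemma subdivision_adj' {G : SimpleGraph U} {v : U} {e : G.edgeSet} :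
    (subdivision G).Adj (Sum.inr e) (Sum.inl v) ↔ v ∈ (e : Sym2 U) := Iff.rfl

lemma subdivision_not_adj_ll {G : SimpleGraph U} {v w : U} :
    ¬ (subdivision G).Adj (Sum.inl v) (Sum.inl w) := fun h => h

lemma subdivision_not_adj_rr {G : SimpleGraph U} {e f : G.edgeSet} :
    ¬ (subdivision G).Adj (Sum.inr e) (Sum.inr f) := fun h => h

/-- Neighbors of an original vertex in the subdivision. -/
lemma card_neighborSet_inl {G : SimpleGraph U} (v : U) :
    Nat.card ((subdivision G).neighborSet (Sum.inl v)) = Nat.card (G.neighborSet v) := by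
  symm
  apply Nat.card_eq_of_bijective
    (fun w => ⟨Sum.inr ⟨s(v, w.1), w.2⟩, Sym2.mem_mk_left _ _⟩)
  constructor
  · intro w1 w2 h
    have h2 : s(v, w1.1) = s(v, w2.1) := by
      have := congrArg Subtype.val h
      exact congrArg Subtype.val (Sum.inr.inj this)
    exact Subtype.ext (Sym2.congr_right.mp h2)
  · rintro ⟨(w | e), hx⟩
    · exact absurd hx fun h => h
    · have hv : v ∈ (e : Sym2 U) := hx
      have hadj : G.Adj v (Sym2.Mem.other hv) := by
        have := e.2
        rw [← Sym2.other_spec hv] at this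
        exact this
      refine ⟨⟨Sym2.Mem.other hv, hadj⟩, ?_⟩
      exact Subtype.ext (congrArg Sum.inr (Subtype.ext (Sym2.other_spec hv)))

/-- Neighbors of an edge-vertex in the subdivision: the two endpoints. -/
lemma card_neighborSet_inr {G : SimpleGraph U} (e : G.edgeSet) :
    Nat.card ((subdivision G).neighborSet (Sum.inr e)) = 2 := by
  obtain ⟨ε, he⟩ := e
  induction ε using Sym2.ind with
  | _ u w =>
    have huw : G.Adj u w := he
    have hne : u ≠ w := huw.ne
    have hset : ((subdivision G).neighborSet (Sum.inr ⟨s(u, w), he⟩))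
        = {Sum.inl u, Sum.inl w} := by
      ext x
      cases x with
      | inl v =>
        simp only [SimpleGraph.mem_neighborSet, subdivision_adj', Sym2.mem_iff,
          Set.mem_insert_iff, Set.mem_singleton_iff, Sum.inl.injEq]
      | inr f =>
        simp only [SimpleGraph.mem_neighborSet, Set.mem_insert_iff, Set.mem_singleton_iff]
        constructor
        · intro h; exact absurd h subdivision_not_adj_rr
        · rintro (h | h) <;> exact absurd h (by simp)
    rw [hset, Nat.card_coe_set_eq, Set.ncard_pair (fun h => hne (Sum.inl.inj h))]

/-- Edges of the subdivision are in bijection with darts. -/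
lemma card_edgeSet_subdivision [Finite U] (G : SimpleGraph U) :
    Nat.card (subdivision G).edgeSet = 2 * Nat.card G.edgeSet := by
  classical
  haveI : Fintype U := Fintype.ofFinite U
  have hbij : Function.Bijective
      (fun d : G.Dart => (⟨s(Sum.inl d.toProd.1, Sum.inr ⟨d.edge, d.edge_mem⟩),
        (by exact Sym2.mem_mk_left _ _ : d.toProd.1 ∈ (d.edge : Sym2 U))⟩ :
          (subdivision G).edgeSet)) := by
    constructor
    · intro d1 d2 h
      have h2 : s(Sum.inl d1.toProd.1, (Sum.inr ⟨d1.edge, d1.edge_mem⟩ : U ⊕ G.edgeSet))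
          = s(Sum.inl d2.toProd.1, Sum.inr ⟨d2.edge, d2.edge_mem⟩) := by
        simpa using congrArg Subtype.val h
      rw [Sym2.eq_iff] at h2
      rcases h2 with ⟨ha, hb⟩ | ⟨ha, _⟩
      · have h1 : d1.toProd.1 = d2.toProd.1 := Sum.inl.inj ha
        have hee : d1.edge = d2.edge := congrArg Subtype.val (Sum.inr.inj hb)
        have : d1.toProd.2 = d2.toProd.2 := by
          have e1 : s(d1.toProd.1, d1.toProd.2) = d1.edge := rfl
          have e2 : s(d2.toProd.1, d2.toProd.2) = d2.edge := rfl
          rw [← e1, ← e2, ← h1] at hee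
          exact Sym2.congr_right.mp hee
        exact SimpleGraph.Dart.ext _ _ (Prod.ext h1 this)
      · exact absurd ha (by simp)
    · rintro ⟨ε, hε⟩
      induction ε using Sym2.ind with
      | _ x y =>
        cases x with
        | inl v =>
          cases y with
          | inl w => exact absurd ((subdivision G).mem_edgeSet.mp hε) fun h => h
          | inr e =>
            have hv : v ∈ (e : Sym2 U) := hε
            have hadj : G.Adj v (Sym2.Mem.other hv) := by
              have := e.2; rw [← Sym2.other_spec hv] at this; exact this
            refine ⟨⟨(v, Sym2.Mem.other hv), hadj⟩, ?_⟩
            exact Subtype.ext (congrArg (fun z => s(Sum.inl v, Sum.inr z))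
              (Subtype.ext (Sym2.other_spec hv)))
        | inr e =>
          cases y with
          | inr f => exact absurd ((subdivision G).mem_edgeSet.mp hε) fun h => h
          | inl v =>
            have hv : v ∈ (e : Sym2 U) := hε
            have hadj : G.Adj v (Sym2.Mem.other hv) := by
              have := e.2; rw [← Sym2.other_spec hv] at this; exact this
            refine ⟨⟨(v, Sym2.Mem.other hv), hadj⟩, ?_⟩
            apply Subtype.ext
            refine Eq.trans ?_ (Sym2.eq_swap)
            exact congrArg (fun z => s(Sum.inl v, Sum.inr z))
              (Subtype.ext (Sym2.other_spec hv))
  rw [← Nat.card_eq_of_bijective _ hbij, Nat.card_eq_fintype_card,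
    SimpleGraph.dart_card_eq_twice_card_edges, Nat.card_eq_fintype_card,
    SimpleGraph.edgeFinset_card]

end AuxDev
section AuxDev2

open Sum Classical Module LinearMap Matrix

variable {U : Type}

lemma subdivision_reach_inl {G : SimpleGraph U} {u v : U} (p : G.Walk u v) :
    (subdivision G).Reachable (Sum.inl u) (Sum.inl v) := by
  induction p with
  | nil => exact SimpleGraph.Reachable.refl _
  | cons h q ih =>
    rename_i a b c
    have h1 : (subdivision G).Adj (Sum.inl a) (Sum.inr ⟨s(a, b), h⟩) := Sym2.mem_mk_left _ _
    have h2 : (subdivision G).Adj (Sum.inr ⟨s(a, b), h⟩) (Sum.inl b) := Sym2.mem_mk_right _ _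
    exact (h1.reachable.trans h2.reachable).trans ih

lemma subdivision_connected {G : SimpleGraph U} (hG : G.Connected) :
    (subdivision G).Connected := by
  haveI : Nonempty U := hG.nonempty
  have key : ∀ x : U ⊕ G.edgeSet, ∃ v : U, (subdivision G).Reachable x (Sum.inl v) := by
    rintro (v | ⟨ε, hε⟩)
    · exact ⟨v, SimpleGraph.Reachable.refl _⟩
    · induction ε using Sym2.ind with
      | _ u w =>
        refine ⟨u, ?_⟩
        have h1 : (subdivision G).Adj (Sum.inr ⟨s(u, w), hε⟩) (Sum.inl u) :=
          Sym2.mem_mk_left _ _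
        exact h1.reachable
    
  constructor
  intro x y
  obtain ⟨v, hv⟩ := key x
  obtain ⟨w, hw⟩ := key y
  exact (hv.trans ((hG.preconnected v w).elim fun p => subdivision_reach_inl p)).trans hw.symm

lemma subdivision_edgeSet_nonempty {G : SimpleGraph U} (hE : Nonempty G.edgeSet) :
    Nonempty (subdivision G).edgeSet := by
  obtain ⟨⟨ε, hε⟩⟩ := hE
  induction ε using Sym2.ind with
  | _ u w =>
    exact ⟨⟨s(Sum.inl u, Sum.inr ⟨s(u, w), hε⟩), Sym2.mem_mk_left _ _⟩⟩

lemma degree_pos [Finite U] {G : SimpleGraph U} (hG : G.Connected)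
    (hE : Nonempty G.edgeSet) (v : U) : 0 < Nat.card (G.neighborSet v) := by
  have hnon : (G.neighborSet v).Nonempty := by
    obtain ⟨⟨ε, hε⟩⟩ := hE
    induction ε using Sym2.ind with
    | _ u w =>
      have hadj : G.Adj u w := hε
      obtain ⟨p⟩ := hG.preconnected v u
      cases p with
      | nil => exact ⟨w, hadj⟩
      | cons h q => exact ⟨_, h⟩
  haveI : Nonempty (G.neighborSet v) := hnon.to_subtype
  exact Nat.card_pos

end AuxDev2
section AuxDev3

open Sum Classical Module LinearMap Matrix

variable {U : Type}

/-- Nullity of a real matrix over a finite index type. -/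
noncomputable def nullity {W : Type} [Finite W] (M : Matrix W W ℝ) : ℕ :=
  haveI := Fintype.ofFinite W
  Module.finrank ℝ (LinearMap.ker M.mulVecLin)

lemma eig_ker {W : Type} [Fintype W] [DecidableEq W] (M : Matrix W W ℝ) :
    Module.End.eigenspace (Matrix.toLin' (1 - M)) 1 = LinearMap.ker M.mulVecLin := by
  ext x
  rw [Module.End.mem_eigenspace_iff, LinearMap.mem_ker,
    Matrix.toLin'_apply, Matrix.mulVecLin_apply, Matrix.sub_mulVec, Matrix.one_mulVec,
    one_smul]
  constructor
  · intro h
    exact sub_eq_self.mp h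
  · intro h; rw [h, sub_zero]

lemma eigMult_one_sub {W : Type} [Finite W] (M : Matrix W W ℝ) :
    eigMult (1 - M) 1 = nullity M := by
  unfold eigMult nullity
  letI : Fintype W := Fintype.ofFinite W
  letI := Classical.decEq W
  rw [eig_ker]

lemma nullity_zero {W : Type} [Finite W] : nullity (0 : Matrix W W ℝ) = Nat.card W := by
  unfold nullity
  letI : Fintype W := Fintype.ofFinite W
  rw [Matrix.mulVecLin_zero, LinearMap.ker_zero, finrank_top,
    Module.finrank_fintype_fun_eq_card, Nat.card_eq_fintype_card]

/-- The weighted sign space of a graph. -/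
def wkerS (H : SimpleGraph U) (a : U → ℝ) : Submodule ℝ (U → ℝ) where
  carrier := {f | ∀ ⦃u w⦄, H.Adj u w → a u * f u + a w * f w = 0}
  add_mem' := by
    intro f g hf hg u w h
    have h1 := hf h; have h2 := hg h
    simp only [Pi.add_apply]
    ring_nf
    ring_nf at h1 h2
    linarith
  zero_mem' := by intro u w h; simp
  smul_mem' := by
    intro t f hf u w h
    have h1 := hf h
    simp only [Pi.smul_apply, smul_eq_mul]
    calc a u * (t * f u) + a w * (t * f w) = t * (a u * f u + a w * f w) := by ring
    _ = 0 := by rw [h1, mul_zero]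

lemma finrank_wkerS [Finite U] (H : SimpleGraph U) (hH : H.Connected)
    (a : U → ℝ) (ha : ∀ u, a u ≠ 0) (c : U → Bool)
    (hc : ∀ ⦃u w⦄, H.Adj u w → c u ≠ c w) :
    Module.finrank ℝ (wkerS H a) = 1 := by
  haveI : Nonempty U := hH.nonempty
  obtain ⟨v₀⟩ := ‹Nonempty U›
  let ev : wkerS H a →ₗ[ℝ] ℝ :=
    { toFun := fun f => f.1 v₀
      map_add' := fun f g => rfl
      map_smul' := fun t f => rfl }
  have hbij : Function.Bijective ev := by
    constructor
    · rw [injective_iff_map_eq_zero]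
      intro f hf
      have key : ∀ ⦃x y : U⦄, H.Walk x y → f.1 x = 0 → f.1 y = 0 := by
        intro x y p
        induction p with
        | nil => exact id
        | cons h q ih =>
          rename_i s t u' hh
          intro hx
          apply ih
          have := f.2 h
          rw [hx, mul_zero, zero_add] at this
          exact (mul_eq_zero.mp this).resolve_left (ha _)
      apply Subtype.ext
      funext u
      exact key ((hH.preconnected v₀ u).some) hf
    · intro t
      refine ⟨⟨fun u => (if c u = c v₀ then t else -t) * a v₀ * (a u)⁻¹, ?_⟩, ?_⟩
      · intro u w h
        have hcc := hc h
        have hu := ha u; have hw := ha w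
        dsimp only
        by_cases h1 : c u = c v₀
        · have h2 : ¬ (c w = c v₀) := fun h2 => hcc (h1.trans h2.symm)
          rw [if_pos h1, if_neg h2]
          field_simp
          ring
        · have h2 : c w = c v₀ := by
            cases hcv : c v₀ <;> cases hcu : c u <;> cases hcw : c w <;>
              simp_all
          rw [if_neg h1, if_pos h2]
          field_simp
          ring
      · show (if c v₀ = c v₀ then t else -t) * a v₀ * (a v₀)⁻¹ = t
        rw [if_pos rfl, mul_assoc, mul_inv_cancel₀ (ha v₀), mul_one]
  calc Module.finrank ℝ (wkerS H a)
      = Module.finrank ℝ ℝ := (LinearEquiv.ofBijective ev hbij).finrank_eq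
    _ = 1 := Module.finrank_self ℝ

end AuxDev3
section AuxDev4

open Sum Classical Module LinearMap Matrix

variable {U : Type}

open Classical in
/-- Scaled incidence matrix used in the block decomposition of `normAdj (subdivision H)`. -/
noncomputable def incB (H : SimpleGraph U) : Matrix U H.edgeSet ℝ :=
  Matrix.of fun v e =>
    if v ∈ (e : Sym2 U) then
      1 / Real.sqrt ((Nat.card (H.neighborSet v) : ℝ) * 2) else 0

lemma mem_wkerS {H : SimpleGraph U} {a : U → ℝ} {f : U → ℝ} :
    f ∈ wkerS H a ↔ ∀ ⦃u w⦄, H.Adj u w → a u * f u + a w * f w = 0 := Iff.rfl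

lemma sum_pair_ite [Fintype U] {u w : U} (h : u ≠ w) (F : U → ℝ) :
    (∑ v, if v ∈ (s(u, w) : Sym2 U) then F v else 0) = F u + F w := by
  classical
  have key : ∀ v, (if v ∈ (s(u, w) : Sym2 U) then F v else 0)
      = (if v = u then F v else 0) + (if v = w then F v else 0) := by
    intro v
    by_cases h1 : v = u
    · subst h1
      have h2 : ¬ v = w := h
      simp [Sym2.mem_iff, h2]
    · by_cases h2 : v = w
      · subst h2
        simp [Sym2.mem_iff, h1]
      · simp [Sym2.mem_iff, h1, h2]
  rw [Finset.sum_congr rfl (fun v _ => key v), Finset.sum_add_distrib,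
    Finset.sum_ite_eq' Finset.univ u F, Finset.sum_ite_eq' Finset.univ w F]
  simp

lemma incB_transpose_mulVec {H : SimpleGraph U} [Fintype U] [Fintype H.edgeSet]
    (f : U → ℝ) {u w : U} (hadj : H.Adj u w) :
    ((incB H)ᵀ *ᵥ f) (⟨s(u, w), hadj⟩ : H.edgeSet)
      = (1 / Real.sqrt ((Nat.card (H.neighborSet u) : ℝ) * 2)) * f u
        + (1 / Real.sqrt ((Nat.card (H.neighborSet w) : ℝ) * 2)) * f w := by
  classical
  have : ∀ v, (incB H)ᵀ (⟨s(u, w), hadj⟩ : H.edgeSet) v * f v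
      = (if v ∈ (s(u, w) : Sym2 U) then
          (1 / Real.sqrt ((Nat.card (H.neighborSet v) : ℝ) * 2)) * f v else 0) := by
    intro v
    simp only [Matrix.transpose_apply, incB, Matrix.of_apply, ite_mul, zero_mul]
  rw [Matrix.mulVec, show ((incB H)ᵀ (⟨s(u, w), hadj⟩ : H.edgeSet)) ⬝ᵥ f
      = ∑ v, (incB H)ᵀ (⟨s(u, w), hadj⟩ : H.edgeSet) v * f v from rfl,
    Finset.sum_congr rfl (fun v _ => this v), sum_pair_ite hadj.ne]

lemma ker_incB_transpose (H : SimpleGraph U) [Fintype U] [Fintype H.edgeSet] :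
    LinearMap.ker (incB H)ᵀ.mulVecLin
      = wkerS H (fun v => 1 / Real.sqrt ((Nat.card (H.neighborSet v) : ℝ) * 2)) := by
  ext f
  rw [LinearMap.mem_ker, mem_wkerS, Matrix.mulVecLin_apply]
  constructor
  · intro hf u w hadj
    have := congrFun hf (⟨s(u, w), hadj⟩ : H.edgeSet)
    rwa [incB_transpose_mulVec f hadj] at this
  · intro hf
    funext e
    obtain ⟨ε, hε⟩ := e
    induction ε using Sym2.ind with
    | _ u w =>
      have hadj : H.Adj u w := hε
      rw [show (⟨s(u, w), hε⟩ : H.edgeSet) = (⟨s(u, w), hadj⟩ : H.edgeSet) from rfl,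
        incB_transpose_mulVec f hadj]
      exact hf hadj

lemma normAdj_subdivision_eq [Finite U] (H : SimpleGraph U) :
    normAdj (subdivision H) = Matrix.fromBlocks 0 (incB H) (incB H)ᵀ 0 := by
  ext x y
  rcases x with v | e <;> rcases y with w | f
  · show (if (subdivision H).Adj (Sum.inl v) (Sum.inl w) then _ else (0:ℝ)) = 0
    rw [if_neg subdivision_not_adj_ll]
  · show (if (subdivision H).Adj (Sum.inl v) (Sum.inr f) then
        1 / Real.sqrt ((Nat.card ((subdivision H).neighborSet (Sum.inl v)) : ℝ)
          * (Nat.card ((subdivision H).neighborSet (Sum.inr f)) : ℝ)) else (0:ℝ))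
      = incB H v f
    rw [card_neighborSet_inl, card_neighborSet_inr]
    by_cases h : v ∈ (f : Sym2 U)
    · rw [if_pos (show (subdivision H).Adj (Sum.inl v) (Sum.inr f) from h)]
      show _ = if v ∈ (f : Sym2 U) then
        1 / Real.sqrt ((Nat.card (H.neighborSet v) : ℝ) * 2) else (0:ℝ)
      rw [if_pos h]
      norm_num
    · rw [if_neg (show ¬ (subdivision H).Adj (Sum.inl v) (Sum.inr f) from h)]
      show (0:ℝ) = if v ∈ (f : Sym2 U) then _ else (0:ℝ)
      rw [if_neg h]
  · show (if (subdivision H).Adj (Sum.inr e) (Sum.inl w) then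
        1 / Real.sqrt ((Nat.card ((subdivision H).neighborSet (Sum.inr e)) : ℝ)
          * (Nat.card ((subdivision H).neighborSet (Sum.inl w)) : ℝ)) else (0:ℝ))
      = incB H w e
    rw [card_neighborSet_inl, card_neighborSet_inr]
    by_cases h : w ∈ (e : Sym2 U)
    · rw [if_pos (show (subdivision H).Adj (Sum.inr e) (Sum.inl w) from h)]
      show _ = if w ∈ (e : Sym2 U) then
        1 / Real.sqrt ((Nat.card (H.neighborSet w) : ℝ) * 2) else (0:ℝ)
      rw [if_pos h, mul_comm]
      norm_num
    · rw [if_neg (show ¬ (subdivision H).Adj (Sum.inr e) (Sum.inl w) from h)]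
      show (0:ℝ) = if w ∈ (e : Sym2 U) then _ else (0:ℝ)
      rw [if_neg h]
  · show (if (subdivision H).Adj (Sum.inr e) (Sum.inr f) then _ else (0:ℝ)) = 0
    rw [if_neg subdivision_not_adj_rr]

lemma nullity_subdivision [Finite U] (H : SimpleGraph U)
    (hH : H.Connected) (hE : Nonempty H.edgeSet) (c : U → Bool)
    (hc : ∀ ⦃u w⦄, H.Adj u w → c u ≠ c w) :
    (nullity (normAdj (subdivision H)) : ℤ)
      = (Nat.card H.edgeSet : ℤ) - (Nat.card U : ℤ) + 2 := by
  classical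
  unfold nullity
  letI iU : Fintype U := Fintype.ofFinite U
  letI iE : Fintype H.edgeSet := Fintype.ofFinite _
  rw [normAdj_subdivision_eq,
    Subsingleton.elim (Fintype.ofFinite (U ⊕ H.edgeSet))
      (inferInstance : Fintype (U ⊕ H.edgeSet))]
  set B := incB H with hB
  have hmem : ∀ x : (U ⊕ H.edgeSet) → ℝ,
      (Matrix.fromBlocks 0 B Bᵀ 0).mulVecLin x = 0
        ↔ Bᵀ.mulVecLin (x ∘ Sum.inl) = 0 ∧ B.mulVecLin (x ∘ Sum.inr) = 0 := by
    intro x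
    rw [Matrix.mulVecLin_apply, Matrix.fromBlocks_mulVec, Matrix.zero_mulVec,
      Matrix.zero_mulVec, add_zero, zero_add, Matrix.mulVecLin_apply, Matrix.mulVecLin_apply]
    constructor
    · intro h
      constructor
      · funext e; exact congrFun h (Sum.inr e)
      · funext v; exact congrFun h (Sum.inl v)
    · rintro ⟨h1, h2⟩
      funext z
      cases z with
      | inl v => exact congrFun h2 v
      | inr e => exact congrFun h1 e
  have Φ : ↥(LinearMap.ker (Matrix.fromBlocks 0 B Bᵀ 0).mulVecLin)
      ≃ₗ[ℝ] ↥(LinearMap.ker Bᵀ.mulVecLin) × ↥(LinearMap.ker B.mulVecLin) :=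
    { toFun := fun x => (⟨x.1 ∘ Sum.inl, ((hmem x.1).mp x.2).1⟩,
        ⟨x.1 ∘ Sum.inr, ((hmem x.1).mp x.2).2⟩)
      map_add' := fun x y => rfl
      map_smul' := fun t x => rfl
      invFun := fun p => ⟨Sum.elim p.1.1 p.2.1, (hmem _).mpr ⟨p.1.2, p.2.2⟩⟩
      left_inv := fun x => Subtype.ext (funext fun z => by cases z <;> rfl)
      right_inv := fun p => Prod.ext (Subtype.ext rfl) (Subtype.ext rfl) }
  rw [Φ.finrank_eq, Module.finrank_prod]
  -- rank-nullity bookkeeping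
  have r1 := LinearMap.finrank_range_add_finrank_ker B.mulVecLin
  have r2 := LinearMap.finrank_range_add_finrank_ker Bᵀ.mulVecLin
  rw [Module.finrank_fintype_fun_eq_card] at r1 r2
  have r3 : Module.finrank ℝ (LinearMap.range Bᵀ.mulVecLin)
      = Module.finrank ℝ (LinearMap.range B.mulVecLin) := B.rank_transpose
  have ha : ∀ v, (fun v => 1 / Real.sqrt ((Nat.card (H.neighborSet v) : ℝ) * 2)) v ≠ 0 := by
    intro v
    have hd := degree_pos hH hE v
    have hpos : (0:ℝ) < (Nat.card (H.neighborSet v) : ℝ) * 2 := by positivity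
    have := Real.sqrt_pos.mpr hpos
    positivity
  have h1 : Module.finrank ℝ (LinearMap.ker Bᵀ.mulVecLin) = 1 := by
    rw [hB, ker_incB_transpose H]
    exact finrank_wkerS H hH _ ha c hc
  rw [h1]
  rw [Nat.card_eq_fintype_card, Nat.card_eq_fintype_card]
  omega

end AuxDev4
section AuxDev5

open Sum Classical Module LinearMap Matrix

variable {U : Type}

lemma normAdj_of_isEmpty_edgeSet (G : SimpleGraph U) (h : IsEmpty G.edgeSet) :
    normAdj G = 0 := by
  ext i j
  show (if G.Adj i j then _ else (0:ℝ)) = 0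
  rw [if_neg (fun hadj => h.elim ⟨s(i, j), G.mem_edgeSet.mpr hadj⟩)]

lemma subdivision_edgeSet_isEmpty {G : SimpleGraph U} (h : IsEmpty G.edgeSet) :
    IsEmpty (subdivision G).edgeSet := by
  constructor
  rintro ⟨ε, hε⟩
  induction ε using Sym2.ind with
  | _ x y =>
    have hadj : (subdivision G).Adj x y := hε
    rcases x with v | e
    · rcases y with w | e
      · exact hadj
      · exact h.elim e
    · exact h.elim e

lemma iterSubdiv_empty_props {V : Type} [Finite V] (G : SimpleGraph V)
    (h : IsEmpty G.edgeSet) (m : ℕ) :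
    IsEmpty ((iterSubdiv G m).2.edgeSet) ∧ Nat.card (iterSubdiv G m).1 = Nat.card V := by
  induction m with
  | zero => exact ⟨h, rfl⟩
  | succ k ih =>
    haveI := iterSubdivFinite G k
    obtain ⟨ih1, ih2⟩ := ih
    refine ⟨subdivision_edgeSet_isEmpty ih1, ?_⟩
    show Nat.card ((iterSubdiv G k).1 ⊕ (iterSubdiv G k).2.edgeSet) = Nat.card V
    rw [Nat.card_sum, ih2, Nat.card_of_isEmpty (α := (iterSubdiv G k).2.edgeSet)]
    omega

lemma iterSubdiv_props {V : Type} [Finite V] (G : SimpleGraph V)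
    (hG : G.Connected) (hE : Nonempty G.edgeSet) (m : ℕ) :
    (iterSubdiv G m).2.Connected ∧ Nonempty (iterSubdiv G m).2.edgeSet ∧
      ((Nat.card (iterSubdiv G m).2.edgeSet : ℤ) - (Nat.card (iterSubdiv G m).1 : ℤ)
        = (Nat.card G.edgeSet : ℤ) - (Nat.card V : ℤ)) := by
  induction m with
  | zero => exact ⟨hG, hE, rfl⟩
  | succ k ih =>
    haveI := iterSubdivFinite G k
    obtain ⟨ih1, ih2, ih3⟩ := ih
    refine ⟨subdivision_connected ih1, subdivision_edgeSet_nonempty ih2, ?_⟩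
    show (Nat.card (subdivision (iterSubdiv G k).2).edgeSet : ℤ)
        - (Nat.card ((iterSubdiv G k).1 ⊕ (iterSubdiv G k).2.edgeSet) : ℤ) = _
    rw [card_edgeSet_subdivision, Nat.card_sum]
    push_cast
    linarith

end AuxDev5

/-- for `n ≥ 2`, the multiplicity of the eigenvalue `1` of the normalized
Laplacian `Lₙ` of `sⁿ(G)` equals `r + 1`, where `r = E₀ − N₀ + 1`. -/
theorem iterSubdiv_lap_eigMult_one {V : Type} [Finite V] (G : SimpleGraph V)
    (hG : G.Connected) (r : ℤ)
    (hr : r = (Nat.card G.edgeSet : ℤ) - (Nat.card V : ℤ) + 1)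
    (n : ℕ) (hn : 2 ≤ n) :
    (eigMult (normLap (iterSubdiv G n).2) 1 : ℤ) = r + 1 := by

  classical
  obtain ⟨m, rfl⟩ : ∃ m, n = m + 2 := ⟨n - 2, by omega⟩
  haveI finm := iterSubdivFinite G m
  haveI finm1 := iterSubdivFinite G (m + 1)
  haveI finm2 := iterSubdivFinite G (m + 2)
  have hlap : normLap (iterSubdiv G (m + 2)).2 = 1 - normAdj (iterSubdiv G (m + 2)).2 := rfl
  by_cases hE : Nonempty G.edgeSet
  · -- main case
    obtain ⟨hconn, hne, hcard⟩ := iterSubdiv_props G hG hE (m + 1)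
    have hcV : Nat.card G.edgeSet = Nat.card G.edgeSet := rfl
    -- coloring of (iterSubdiv G (m+1)).1 = (iterSubdiv G m).1 ⊕ edges
    set K := (iterSubdiv G m).2 with hK
    have hgraph : (iterSubdiv G (m + 2)).2 = subdivision (iterSubdiv G (m + 1)).2 := rfl
    have hgraph1 : (iterSubdiv G (m + 1)).2 = subdivision K := rfl
    have hc : ∀ ⦃u w : (iterSubdiv G m).1 ⊕ K.edgeSet⦄,
        (iterSubdiv G (m + 1)).2.Adj u w →
          (Sum.elim (fun _ => false) (fun _ => true) : _ → Bool) u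
            ≠ Sum.elim (fun _ => false) (fun _ => true) w := by
      rintro (v | e) (w | f) h
      · exact absurd h fun x => x
      · simp
      · simp
      · exact absurd h fun x => x
    have key := nullity_subdivision (iterSubdiv G (m + 1)).2 hconn hne _ hc
    have key2 : (nullity (normAdj (iterSubdiv G (m + 2)).2) : ℤ)
        = (Nat.card (iterSubdiv G (m + 1)).2.edgeSet : ℤ)
          - (Nat.card (iterSubdiv G (m + 1)).1 : ℤ) + 2 := key
    rw [hlap, eigMult_one_sub, key2, hr]
    linarith [hcard]
  · -- trivial case : no edges
    haveI hEmpty : IsEmpty G.edgeSet := not_nonempty_iff.mp hE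
    have hV1 : Nat.card V = 1 := by
      rw [Nat.card_eq_one_iff_unique]
      refine ⟨⟨fun a b => ?_⟩, hG.nonempty⟩
      obtain ⟨p⟩ := hG.preconnected a b
      cases p with
      | nil => rfl
      | cons h q => exact hEmpty.elim ⟨_, G.mem_edgeSet.mpr h⟩
    obtain ⟨he2, hv2⟩ := iterSubdiv_empty_props G hEmpty (m + 2)
    rw [hlap, eigMult_one_sub,
      normAdj_of_isEmpty_edgeSet _ he2, nullity_zero, hv2, hV1, hr,
      Nat.card_of_isEmpty (α := G.edgeSet)]
    omega
end
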